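/- Let E be a finite-dimensional real inner product space, let U : E → ℝ be convex and differentiable with gradient ∇U, let χ ≥ 0 and H, J_p ∈ E. If ‖H − ∇U(J_p)‖ ≤ χ, then J_p itself minimizes the incremental functional F_H(J) = U(J) − ⟪H, J⟫ + χ‖J − J_p‖ over E; i.e., the magnetic polarization does not change when the effective driving field does not exceed the pinning strength. -/

import Mathlib

open RealInnerProductSpace

lemma subgrad_ineq {E : Type*} [NormedAddCommGroup E] [InnerProductSpace ℝ E]
    [CompleteSpace E]
    (U : E → ℝ) (g : E) (hU : ConvexOn ℝ Set.univ U) (x y : E)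
    (hg : HasGradientAt U g x) : ⟪g, y - x⟫ ≤ U y - U x := by
  rcases eq_or_ne y x with rfl | hne
  · simp
  set v := y - x with hv
  have hline : ∀ t : ℝ, HasDerivAt (fun t : ℝ => x + t • v) v t := by
    intro t
    simpa using ((hasDerivAt_id t).smul_const v).const_add x
  have hgconv : ConvexOn ℝ Set.univ (fun t : ℝ => U (x + t • v)) := by
    have := hU.comp_affineMap (AffineMap.lineMap x y)
    simp only [Set.preimage_univ] at this
    suffices h : (fun t : ℝ => U (x + t • v)) = U ∘ AffineMap.lineMap x y by rw [h]; exact this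
    funext t
    simp only [Function.comp, AffineMap.lineMap_apply_module, hv]
    congr 1; module
  have hderiv : HasDerivAt (fun t : ℝ => U (x + t • v)) ⟪g, v⟫ 0 := by
    have h0 : HasFDerivAt U ((InnerProductSpace.toDual ℝ E) g) ((fun t : ℝ => x + t • v) 0) := by
      simpa using hg.hasFDerivAt
    have := (h0.comp 0 (hline 0).hasFDerivAt).hasDerivAt
    have h2 : HasDerivAt (U ∘ fun t : ℝ => x + t • v) ⟪g, v⟫ 0 := by
      simpa [real_inner_comm] using this
    exact h2
  have := hgconv.le_slope_of_hasDerivAt (Set.mem_univ (0:ℝ)) (Set.mem_univ (1:ℝ))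
    one_pos (by simpa using hderiv)
  simp only [slope_def_field] at this
  have hx : x + v = y := by rw [hv]; abel
  simpa [div_one, hx] using this

/-- if the effective driving field does not exceed the pinning strength,
the previous polarization `J_p` minimizes the incremental functional. -/
theorem no_update_below_pinning_threshold
    {E : Type*} [NormedAddCommGroup E] [InnerProductSpace ℝ E] [FiniteDimensional ℝ E]
    (U : E → ℝ) (U' : E → E) (hU : ConvexOn ℝ Set.univ U)
    (hU' : ∀ J : E, HasGradientAt U (U' J) J)
    (χ : ℝ) (hχ : 0 ≤ χ) (H Jp : E)
    (hsmall : ‖H - U' Jp‖ ≤ χ) :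
    ∀ J : E,
      U Jp - ⟪H, Jp⟫ + χ * ‖Jp - Jp‖ ≤ U J - ⟪H, J⟫ + χ * ‖J - Jp‖ := by
  intro J
  have hsub : ⟪U' Jp, J - Jp⟫ ≤ U J - U Jp := subgrad_ineq U (U' Jp) hU Jp J (hU' Jp)
  have hinner : ⟪H - U' Jp, J - Jp⟫ ≤ χ * ‖J - Jp‖ := by
    calc ⟪H - U' Jp, J - Jp⟫ ≤ ‖H - U' Jp‖ * ‖J - Jp‖ := real_inner_le_norm _ _
      _ ≤ χ * ‖J - Jp‖ := by gcongr
  have hexp : ⟪H, J⟫ - ⟪H, Jp⟫ = ⟪U' Jp, J - Jp⟫ + ⟪H - U' Jp, J - Jp⟫ := by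
    rw [inner_sub_left, inner_sub_right, inner_sub_right]; ring
  simp only [sub_self, norm_zero, mul_zero, add_zero]
  nlinarith [hsub, hinner, hexp]
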